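/- arXiv:2312.11706 — 4 statements merged into one kernel-verified Lean document; each statement's English description precedes it below -/
import Mathlib

section
/- No natural number occurs three or more times as a value of the sequence a; that is, there do not exist natural numbers x < y < z with a(x) = a(y) = a(z). Equivalently, for every n the set {m : a(m) = n} has at most 2 elements. -/
/-- The sequence A105774: `a n = n` for `n ≤ 1`, and
`a n = fib (j+1) - a (n - fib j)` where `j ≥ 2` is the unique index
with `fib j < n ≤ fib (j+1)` (realized as the greatest `j ≤ n` with `fib j < n`). -/
def a (n : ℕ) : ℕ :=
  if _h : n ≤ 1 then n
  else
    Nat.fib (Nat.findGreatest (fun j => Nat.fib j < n) n + 1) -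
      a (n - Nat.fib (Nat.findGreatest (fun j => Nat.fib j < n) n))
decreasing_by
  have h2 : 2 ≤ n := by omega
  have hj : 2 ≤ Nat.findGreatest (fun j => Nat.fib j < n) n :=
    Nat.le_findGreatest h2 (by show Nat.fib 2 < n; simp [Nat.fib_two]; omega)
  have hpos : 0 < Nat.fib (Nat.findGreatest (fun j => Nat.fib j < n) n) :=
    Nat.fib_pos.mpr (by omega)
  omega

/-- abbreviation for the interval index -/
def J (n : ℕ) : ℕ := Nat.findGreatest (fun j => Nat.fib j < n) n

lemma J_spec {n : ℕ} (h : 2 ≤ n) :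
    2 ≤ J n ∧ Nat.fib (J n) < n ∧ n ≤ Nat.fib (J n + 1) := by
  have hj : 2 ≤ J n :=
    Nat.le_findGreatest h (by show Nat.fib 2 < n; simp [Nat.fib_two]; omega)
  have hlt : Nat.fib (J n) < n := by
    have := Nat.findGreatest_spec (P := fun j => Nat.fib j < n) (m := 2) h
      (by show Nat.fib 2 < n; simp [Nat.fib_two]; omega)
    exact this
  refine ⟨hj, hlt, ?_⟩
  by_cases hle : J n + 1 ≤ n
  · have := Nat.findGreatest_is_greatest (P := fun j => Nat.fib j < n)
      (Nat.lt_succ_self (J n)) hle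
    simpa using Nat.le_of_not_lt this
  · have h1 : J n ≤ Nat.fib (J n) + 1 := Nat.le_fib_add_one _
    have h2 : Nat.fib (J n - 1 + 2) = Nat.fib (J n - 1) + Nat.fib (J n - 1 + 1) :=
      Nat.fib_add_two
    have h3 : 0 < Nat.fib (J n - 1) := Nat.fib_pos.mpr (by omega)
    have h4 : J n - 1 + 2 = J n + 1 := by omega
    have h5 : J n - 1 + 1 = J n := by omega
    rw [h4, h5] at h2
    omega

lemma a_rec {n : ℕ} (h : 2 ≤ n) :
    a n = Nat.fib (J n + 1) - a (n - Nat.fib (J n)) := by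
  rw [a]
  simp only [J]
  rw [dif_neg (by omega)]

lemma fib_lt_fib {j k : ℕ} (h : Nat.fib j < Nat.fib k) : j < k := by
  by_contra hc
  exact absurd (Nat.fib_mono (Nat.le_of_not_lt hc)) (Nat.not_le.mpr h)

lemma a_one : a 1 = 1 := by rw [a]; norm_num

lemma a_bounds : ∀ n : ℕ, (1 ≤ n → 1 ≤ a n) ∧
    (2 ≤ n → a n < Nat.fib (J n + 1)) ∧ (4 ≤ n → Nat.fib (J n) < a n) := by
  intro n
  induction n using Nat.strong_induction_on with
  | _ n ih =>
  rcases Nat.lt_or_ge n 2 with hn | hn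
  · refine ⟨fun h1 => ?_, fun h2 => by omega, fun h4 => by omega⟩
    have : n = 1 := by omega
    rw [this, a_one]
  -- main case n ≥ 2
  obtain ⟨hj2, hlt, hle⟩ := J_spec hn
  have hrec := a_rec hn
  set j := J n with hJ
  set m := n - Nat.fib j with hm
  have hfibpos : 0 < Nat.fib j := Nat.fib_pos.mpr (by omega)
  have hm1 : 1 ≤ m := by omega
  have hmn : m < n := by omega
  have hsplit : Nat.fib (j + 1) = Nat.fib (j - 1) + Nat.fib j := by
    have h2 : Nat.fib (j - 1 + 2) = Nat.fib (j - 1) + Nat.fib (j - 1 + 1) :=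
      Nat.fib_add_two
    have h4 : j - 1 + 2 = j + 1 := by omega
    have h5 : j - 1 + 1 = j := by omega
    rw [h4, h5] at h2; exact h2
  have hmle : m ≤ Nat.fib (j - 1) := by omega
  -- a m < fib (j - 1) when j ≥ 4, and in general a m ≤ fib (j-1) bound for m ≥ 2
  have hamlt : 2 ≤ m → a m < Nat.fib (j - 1) := by
    intro hm2
    obtain ⟨hj2', hlt', hle'⟩ := J_spec hm2
    have hup := (ih m hmn).2.1 hm2
    have hJm : J m < j - 1 := fib_lt_fib (lt_of_lt_of_le hlt' hmle)
    exact lt_of_lt_of_le hup (Nat.fib_mono (by omega))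
  have hamub : a m < Nat.fib (j + 1) := by
    rcases Nat.lt_or_ge m 2 with hm2 | hm2
    · have : m = 1 := by omega
      rw [this, a_one]; omega
    · have := hamlt hm2
      have : Nat.fib (j - 1) ≤ Nat.fib (j + 1) := Nat.fib_mono (by omega)
      omega
  have hampos : 1 ≤ a m := (ih m hmn).1 hm1
  refine ⟨fun _ => by omega, fun _ => by omega, fun h4 => ?_⟩
  -- lower bound: need a m < fib (j - 1)
  have hj4 : 4 ≤ j := by
    have : (4:ℕ) ≤ n := h4
    exact Nat.le_findGreatest (by omega) (by show Nat.fib 4 < n; norm_num [Nat.fib]; omega)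
  have hkey : a m < Nat.fib (j - 1) := by
    rcases Nat.lt_or_ge m 2 with hm2 | hm2
    · have hm' : m = 1 := by omega
      have : 2 ≤ Nat.fib (j - 1) := by
        calc 2 = Nat.fib 3 := by norm_num [Nat.fib]
        _ ≤ Nat.fib (j - 1) := Nat.fib_mono (by omega)
      rw [hm', a_one]; omega
    · exact hamlt hm2
  omega

lemma a_pos {n : ℕ} (h : 1 ≤ n) : 1 ≤ a n := (a_bounds n).1 h

lemma a_glob_upper {n k : ℕ} (h2 : 2 ≤ n) (hk : n ≤ Nat.fib k) : a n < Nat.fib k := by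
  obtain ⟨hj2, hlt, _⟩ := J_spec h2
  have : J n < k := fib_lt_fib (lt_of_lt_of_le hlt hk)
  exact lt_of_lt_of_le ((a_bounds n).2.1 h2) (Nat.fib_mono (by omega))

lemma a_glob_upper' {n k : ℕ} (h1 : 1 ≤ n) (hk2 : 2 ≤ k) (hk : n ≤ Nat.fib k) :
    a n ≤ Nat.fib k := by
  rcases Nat.lt_or_ge n 2 with h | h
  · have : n = 1 := by omega
    rw [this, a_one]
    calc 1 = Nat.fib 2 := by norm_num [Nat.fib]
    _ ≤ Nat.fib k := Nat.fib_mono hk2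
  · exact le_of_lt (a_glob_upper h hk)

lemma J_eq {n j : ℕ} (hj : 2 ≤ j) (h1 : Nat.fib j < n) (h2 : n ≤ Nat.fib (j + 1)) :
    J n = j := by
  have hn2 : 2 ≤ n := by
    have : 1 ≤ Nat.fib j := Nat.fib_pos.mpr (by omega)
    omega
  obtain ⟨hj2, hlt, hle⟩ := J_spec hn2
  have h3 : J n < j + 1 := fib_lt_fib (lt_of_lt_of_le hlt h2)
  have h4 : j < J n + 1 := fib_lt_fib (lt_of_lt_of_le h1 hle)
  omega

lemma a_zero : a 0 = 0 := by rw [a]; norm_num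

lemma a_two : a 2 = 1 := by
  have hJ : J 2 = 2 := J_eq (le_refl 2) (by norm_num [Nat.fib]) (by norm_num [Nat.fib])
  rw [a_rec (le_refl 2), hJ]
  norm_num [Nat.fib, a_one]

lemma a_three : a 3 = 2 := by
  have hJ : J 3 = 3 := J_eq (by norm_num) (by norm_num [Nat.fib]) (by norm_num [Nat.fib])
  rw [a_rec (by norm_num), hJ]
  have : Nat.fib 4 = 3 := by norm_num [Nat.fib]
  have : Nat.fib 3 = 2 := by norm_num [Nat.fib]
  simp_all [a_one]

lemma key : ∀ z y x : ℕ, y < z → x < y → ¬(a x = a y ∧ a y = a z) := by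
  intro z
  induction z using Nat.strong_induction_on with
  | _ z ih =>
  intro y x hyz hxy ⟨hxy', hyz'⟩
  rcases Nat.lt_or_ge z 4 with hz | hz
  · interval_cases z <;> interval_cases y <;> interval_cases x <;>
      simp_all [a_zero, a_one, a_two, a_three]
  · have hz2 : 2 ≤ z := by omega
    obtain ⟨hj2, hlt, hle⟩ := J_spec hz2
    set j := J z with hJ
    have hj4 : 4 ≤ j :=
      Nat.le_findGreatest (by omega) (by show Nat.fib 4 < z; norm_num [Nat.fib]; omega)
    have hfib4 : (3:ℕ) ≤ Nat.fib j := by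
      calc (3:ℕ) = Nat.fib 4 := by norm_num [Nat.fib]
      _ ≤ Nat.fib j := Nat.fib_mono hj4
    have hlow : Nat.fib j < a z := (a_bounds z).2.2 hz
    -- x ≥ 2
    have hx2 : 2 ≤ x := by
      by_contra hc
      interval_cases x <;> simp_all [a_zero, a_one] <;> omega
    -- x > fib j
    have hxgt : Nat.fib j < x := by
      by_contra hc
      have := a_glob_upper hx2 (Nat.le_of_not_lt hc)
      omega
    have hygt : Nat.fib j < y := lt_trans hxgt hxy
    have hJx : J x = j := J_eq (by omega) hxgt (by omega)
    have hJy : J y = j := J_eq (by omega) hygt (by omega)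
    have hrx := a_rec hx2
    have hry := a_rec (show 2 ≤ y by omega)
    have hrz := a_rec hz2
    rw [hJx] at hrx
    rw [hJy] at hry
    rw [← hJ] at hrz
    set mx := x - Nat.fib j with hmx
    set my := y - Nat.fib j with hmy
    set mz := z - Nat.fib j with hmz
    have hub : ∀ m : ℕ, 1 ≤ m → m ≤ Nat.fib (j + 1) → a m ≤ Nat.fib (j + 1) :=
      fun m h1 h2 => a_glob_upper' h1 (by omega) h2
    have hbx : a mx ≤ Nat.fib (j + 1) := hub mx (by omega) (by omega)
    have hby : a my ≤ Nat.fib (j + 1) := hub my (by omega) (by omega)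
    have hbz : a mz ≤ Nat.fib (j + 1) := hub mz (by omega) (by omega)
    have e1 : a mx = a my := by omega
    have e2 : a my = a mz := by omega
    exact ih mz (by omega) my mx (by omega) (by omega) ⟨e1, e2⟩

/-- No natural number occurs three or more times as a value of the sequence `a`:
there do not exist `x < y < z` with `a x = a y = a z`. -/
theorem a105774_no_value_thrice :
    ¬ ∃ x y z : ℕ, x < y ∧ y < z ∧ a x = a y ∧ a y = a z := by
  rintro ⟨x, y, z, h1, h2, h3, h4⟩
  exact key z y x h2 h1 ⟨h3, h4⟩
end

section
/- For all integers k ≥ 3, a(L_k + 1) = F_{k+1} + 1. -/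
/-- The Lucas numbers: L₀ = 2, L₁ = 1, L_{n+2} = L_{n+1} + L_n. -/
def lucas : ℕ → ℕ
  | 0 => 2
  | 1 => 1
  | n + 2 => lucas (n + 1) + lucas n


lemma le_fib_add_one : ∀ j : ℕ, j ≤ Nat.fib j + 1
  | 0 => by decide
  | 1 => by decide
  | 2 => by decide
  | (j+3) => by
    have h1 := le_fib_add_one (j+2)
    have h2 : 1 ≤ Nat.fib (j+1) := Nat.fib_pos.mpr (by omega)
    have h3 : Nat.fib (j+3) = Nat.fib (j+1) + Nat.fib (j+2) := Nat.fib_add_two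
    omega

lemma fg_eq (j n : ℕ) (h1 : Nat.fib j < n) (h2 : n ≤ Nat.fib (j+1)) :
    Nat.findGreatest (fun i => Nat.fib i < n) n = j := by
  rw [Nat.findGreatest_eq_iff]
  refine ⟨by have := le_fib_add_one j; omega, fun _ => h1, ?_⟩
  intro m hm _ hc
  have := Nat.fib_mono (show j + 1 ≤ m from hm)
  omega

lemma a_fib_succ (m : ℕ) (hm : 2 ≤ m) : a (Nat.fib m + 1) = Nat.fib (m+1) - 1 := by
  have hlt : Nat.fib m < Nat.fib m + 1 := Nat.lt_succ_self _
  have hle : Nat.fib m + 1 ≤ Nat.fib (m+1) := by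
    have := Nat.fib_lt_fib_succ hm; omega
  have hpos : 1 ≤ Nat.fib m := Nat.fib_pos.mpr (by omega)
  rw [a]
  rw [dif_neg (by omega), fg_eq m _ hlt hle]
  simp [a_one]

lemma lucas_eq : ∀ k, lucas (k+1) = Nat.fib (k+2) + Nat.fib k
  | 0 => by decide
  | 1 => by decide
  | (k+2) => by
    have h1 := lucas_eq (k+1)
    have h2 := lucas_eq k
    show lucas (k+2) + lucas (k+1) = _
    rw [h1, h2, Nat.fib_add_two (n := k+2), Nat.fib_add_two (n := k)]
    ring

/-- For all `k ≥ 3`, `a (L_k + 1) = F_{k+1} + 1`. -/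
theorem a105774_at_lucas_succ (k : ℕ) (hk : 3 ≤ k) :
    a (lucas k + 1) = Nat.fib (k + 1) + 1 := by
  obtain ⟨m, rfl⟩ : ∃ m, k = m + 3 := ⟨k - 3, by omega⟩
  have hl : lucas (m+3) = Nat.fib (m+4) + Nat.fib (m+2) := lucas_eq (m+2)
  have hf2 : Nat.fib (m+5) = Nat.fib (m+3) + Nat.fib (m+4) := Nat.fib_add_two
  have hf3 : Nat.fib (m+4) = Nat.fib (m+2) + Nat.fib (m+3) := Nat.fib_add_two
  have hf4 : Nat.fib (m+3) = Nat.fib (m+1) + Nat.fib (m+2) := Nat.fib_add_two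
  have hp1 : 1 ≤ Nat.fib (m+1) := Nat.fib_pos.mpr (by omega)
  have hp2 : 1 ≤ Nat.fib (m+2) := Nat.fib_pos.mpr (by omega)
  set n := lucas (m+3) + 1 with hn
  have hlt : Nat.fib (m+4) < n := by omega
  have hle : n ≤ Nat.fib (m+4+1) := by show n ≤ Nat.fib (m+5); omega
  rw [a, dif_neg (by omega), fg_eq (m+4) n hlt hle]
  have hsub : n - Nat.fib (m+4) = Nat.fib (m+2) + 1 := by omega
  rw [hsub, a_fib_succ (m+2) (by omega)]
  show Nat.fib (m+5) - (Nat.fib (m+3) - 1) = Nat.fib (m+4) + 1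
  omega
end

section
/- For all integers k ≥ 2, a(F_k + 1) = F_{k+1} − 1. -/
lemma findGreatest_fib (k : ℕ) (hk : 2 ≤ k) :
    Nat.findGreatest (fun j => Nat.fib j < Nat.fib k + 1) (Nat.fib k + 1) = k := by
  rw [Nat.findGreatest_eq_iff]
  have hle : k ≤ Nat.fib k + 1 := by
    rcases le_or_gt 5 k with h | h
    · have := Nat.le_fib_self h; omega
    · interval_cases k <;> simp [Nat.fib]
  refine ⟨hle, ?_, ?_⟩
  · intro _; omega
  · intro m hm _ h
    have : Nat.fib k < Nat.fib m := by
      calc Nat.fib k < Nat.fib (k + 1) := by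
            have h1 : 0 < Nat.fib (k - 1) := Nat.fib_pos.mpr (by omega)
            have := Nat.fib_add_two (n := k - 1)
            have hk1 : k - 1 + 2 = k + 1 := by omega
            have hk2 : k - 1 + 1 = k := by omega
            rw [hk1, hk2] at this
            omega
        _ ≤ Nat.fib m := Nat.fib_mono hm
    omega

/-- For all `k ≥ 2`, `a (F_k + 1) = F_{k+1} - 1`. -/
theorem a105774_at_fib_succ (k : ℕ) (hk : 2 ≤ k) :
    a (Nat.fib k + 1) = Nat.fib (k + 1) - 1 := by
  have hfib : 1 ≤ Nat.fib k := Nat.fib_pos.mpr (by omega)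
  rw [a, dif_neg (by omega)]
  rw [findGreatest_fib k hk]
  simp [a]
end

section
/- Let s(n) = a(F_n). Then: (i) for all integers n ≥ 4, s(n) = s(n−1) + s(n−3) + s(n−4); (ii) for all n ≥ 0, 10·s(n) = L_n + 5·F_n + e_n, where e_n = −2·(−1)^{n/2} if n is even and e_n = 4·(−1)^{(n−1)/2} if n is odd. -/
lemma fib3 (n : ℕ) : Nat.fib (n + 3) = Nat.fib (n + 1) + Nat.fib (n + 2) :=
  Nat.fib_add_two

lemma fib_ge (n : ℕ) : n + 2 ≤ Nat.fib (n + 3) := by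
  induction n with
  | zero => decide
  | succ m ih =>
    have h : 0 < Nat.fib (m + 2) := Nat.fib_pos.mpr (by omega)
    have h2 : Nat.fib (m + 4) = Nat.fib (m + 2) + Nat.fib (m + 3) := Nat.fib_add_two
    show m + 3 ≤ Nat.fib (m + 4)
    omega

lemma unfold_s (n : ℕ) : a (Nat.fib (n+3)) = Nat.fib (n+3) - a (Nat.fib (n+1)) := by
  have hge := fib_ge n
  have hFG : Nat.findGreatest (fun j => Nat.fib j < Nat.fib (n+3)) (Nat.fib (n+3)) = n + 2 := by
    rw [Nat.findGreatest_eq_iff]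
    refine ⟨by omega, fun _ => Nat.fib_lt_fib_succ (by omega), fun j hj _ => ?_⟩
    simp only [not_lt]
    exact Nat.fib_mono (by omega)
  have hf := fib3 n
  rw [a, dif_neg (by omega), hFG]
  rw [show n + 2 + 1 = n + 3 from rfl, show Nat.fib (n+3) - Nat.fib (n+2) = Nat.fib (n+1) by omega]

lemma s_le (n : ℕ) : a (Nat.fib n) ≤ Nat.fib n := by
  match n with
  | 0 => rw [a]; simp
  | 1 => rw [a]; simp
  | 2 => rw [Nat.fib_two, a]; simp
  | m + 3 => rw [unfold_s]; omega

lemma srec (n : ℕ) : a (Nat.fib (n+3)) + a (Nat.fib (n+1)) = Nat.fib (n+3) := by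
  have h1 := s_le (n+1)
  have h2 : Nat.fib (n+1) ≤ Nat.fib (n+3) := Nat.fib_mono (by omega)
  rw [unfold_s]; omega

def E (n : ℕ) : ℤ :=
  if n % 2 = 0 then -2 * (-1 : ℤ) ^ (n / 2) else 4 * (-1 : ℤ) ^ ((n - 1) / 2)

lemma E_add_two (n : ℕ) : E (n + 2) = -E n := by
  unfold E
  rcases Nat.even_or_odd n with h | h
  · have h0 : n % 2 = 0 := Nat.even_iff.mp h
    simp only [Nat.add_mod_right, h0, if_true, show (n+2)/2 = n/2 + 1 by omega, pow_succ]
    ring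
  · have h1 : n % 2 = 1 := Nat.odd_iff.mp h
    simp only [Nat.add_mod_right, h1, show (1:ℕ) ≠ 0 by decide, if_false,
      show (n+2-1)/2 = (n-1)/2 + 1 by omega, pow_succ]
    ring

lemma lucas_fib (n : ℕ) : lucas (n+3) + lucas (n+1) = 5 * Nat.fib (n+2) := by
  induction n using Nat.strong_induction_on with
  | _ n ih =>
    match n with
    | 0 => decide
    | 1 => decide
    | m + 2 =>
      have h1 : lucas (m+4) + lucas (m+2) = 5 * Nat.fib (m+3) := ih (m+1) (by omega)
      have h2 : lucas (m+3) + lucas (m+1) = 5 * Nat.fib (m+2) := ih m (by omega)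
      have e1 : lucas (m + 5) = lucas (m + 4) + lucas (m + 3) := rfl
      have e2 : lucas (m + 3) = lucas (m + 2) + lucas (m + 1) := rfl
      have e3 : Nat.fib (m + 4) = Nat.fib (m + 2) + Nat.fib (m + 3) := Nat.fib_add_two
      show lucas (m + 5) + lucas (m + 3) = 5 * Nat.fib (m + 4)
      omega

lemma main_id (n : ℕ) : 10 * (a (Nat.fib n) : ℤ) = lucas n + 5 * Nat.fib n + E n := by
  induction n using Nat.strong_induction_on with
  | _ n ih =>
    match n with
    | 0 => rw [a]; norm_num [lucas, E]
    | 1 => rw [show Nat.fib 1 = 1 from rfl, a]; norm_num [lucas, E]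
    | 2 => rw [show Nat.fib 2 = 1 from rfl, a]; norm_num [lucas, E]
    | m + 3 =>
      have hs := srec m
      have ih1 := ih (m+1) (by omega)
      have hl : lucas (m+3) + lucas (m+1) = 5 * Nat.fib (m+2) := lucas_fib m
      have hlz : (lucas (m+3) : ℤ) + lucas (m+1) = 5 * Nat.fib (m+2) := by exact_mod_cast hl
      have hE : E (m+3) = -E (m+1) := E_add_two (m+1)
      have hf : (Nat.fib (m + 3) : ℤ) = Nat.fib (m + 1) + Nat.fib (m + 2) := by
        exact_mod_cast fib3 m
      have hcast : (a (Nat.fib (m+3)) : ℤ) + a (Nat.fib (m+1)) = Nat.fib (m+3) := by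
        exact_mod_cast hs
      rw [hE]
      linarith

/-- With `s n = a (F n)`: (i) `s n = s (n-1) + s (n-3) + s (n-4)` for `n ≥ 4`;
(ii) `10 s n = L n + 5 F n + e n`, where `e n = -2 (-1)^(n/2)` for even `n` and
`e n = 4 (-1)^((n-1)/2)` for odd `n`. -/
theorem a105774_at_fib (n : ℕ) :
    (4 ≤ n →
      a (Nat.fib n) =
        a (Nat.fib (n - 1)) + a (Nat.fib (n - 3)) + a (Nat.fib (n - 4))) ∧
    10 * (a (Nat.fib n) : ℤ) = lucas n + 5 * Nat.fib n +
      (if n % 2 = 0 then -2 * (-1 : ℤ) ^ (n / 2) else 4 * (-1 : ℤ) ^ ((n - 1) / 2)) := by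
  constructor
  · intro hn
    obtain ⟨m, rfl⟩ : ∃ m, n = m + 4 := ⟨n - 4, by omega⟩
    rw [show m+4-1 = m+3 from rfl, show m+4-3 = m+1 from rfl, Nat.add_sub_cancel]
    have h0 := main_id m
    have h1 := main_id (m+1)
    have h3 := main_id (m+3)
    have h4 := main_id (m+4)
    have hE1 : E (m+3) = -E (m+1) := E_add_two (m+1)
    have hE2 : E (m+4) = -E (m+2) := E_add_two (m+2)
    have hE0 : E (m+2) = -E m := E_add_two m
    have hl3 : (lucas (m+4) : ℤ) = lucas (m+3) + lucas (m+1) + lucas m := by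
      have e1 : lucas (m + 4) = lucas (m + 3) + lucas (m + 2) := rfl
      have e2 : lucas (m + 2) = lucas (m + 1) + lucas m := rfl
      have : lucas (m + 4) = lucas (m + 3) + lucas (m + 1) + lucas m := by omega
      exact_mod_cast this
    have hf3 : (Nat.fib (m+4) : ℤ) = Nat.fib (m+3) + Nat.fib (m+1) + Nat.fib m := by
      have e1 : Nat.fib (m + 4) = Nat.fib (m + 2) + Nat.fib (m + 3) := Nat.fib_add_two
      have e2 : Nat.fib (m + 2) = Nat.fib m + Nat.fib (m + 1) := Nat.fib_add_two
      have : Nat.fib (m + 4) = Nat.fib (m + 3) + Nat.fib (m + 1) + Nat.fib m := by omega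
      exact_mod_cast this
    have key : (10 : ℤ) * a (Nat.fib (m+4)) =
        10 * ((a (Nat.fib (m+3)) + a (Nat.fib (m+1)) + a (Nat.fib m) : ℕ) : ℤ) := by
      push_cast
      linarith
    have := mul_left_cancel₀ (show (10:ℤ) ≠ 0 by norm_num) key
    exact_mod_cast this
  · exact main_id n
end
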